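/- Let g : (0,∞)³ → (0,∞) be a function of (σ_B², V, S) satisfying for all positive arguments and all λ > 0: (shares scaling) g(λ²σ_B², V/λ, λS) = g(σ_B², V, S); (money scaling) g(λ²σ_B², V, λS) = g(σ_B², V, S); (time scaling) g(λσ_B², λV, S) = λ·g(σ_B², V, S). Then there exists a constant c > 0 such that g(σ_B², V, S) = c² · σ_B²/S² for all positive arguments. -/

import Mathlib

/-- Wyart et al. relation: if the number of trades `N = g(σ_B², V, S)` is a
dimensionally invariant positive function of the squared Bachelier volatility,
the volume and the bid-ask spread, then `g(σ_B², V, S) = c² · σ_B² / S²`. -/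
theorem wyart_relation
    (g : ℝ → ℝ → ℝ → ℝ)
    (hpos : ∀ sB V S : ℝ, 0 < sB → 0 < V → 0 < S → 0 < g sB V S)
    (hshares : ∀ sB V S lam : ℝ, 0 < sB → 0 < V → 0 < S → 0 < lam →
      g (lam ^ 2 * sB) (V / lam) (lam * S) = g sB V S)
    (hmoney : ∀ sB V S lam : ℝ, 0 < sB → 0 < V → 0 < S → 0 < lam →
      g (lam ^ 2 * sB) V (lam * S) = g sB V S)
    (htime : ∀ sB V S lam : ℝ, 0 < sB → 0 < V → 0 < S → 0 < lam →
      g (lam * sB) (lam * V) S = lam * g sB V S) :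
    ∃ c : ℝ, 0 < c ∧ ∀ sB V S : ℝ, 0 < sB → 0 < V → 0 < S →
      g sB V S = c ^ 2 * sB / S ^ 2 := by
  -- g does not depend on V
  have hindep : ∀ sB V W S : ℝ, 0 < sB → 0 < V → 0 < W → 0 < S →
      g sB V S = g sB W S := by
    intro sB V W S hsB hV hW hS
    have hlam : (0:ℝ) < V / W := div_pos hV hW
    have h1 := hshares (sB / (V/W)^2) V (S / (V/W)) (V/W)
      (div_pos hsB (pow_pos hlam 2)) hV (div_pos hS hlam) hlam
    have h2 := hmoney (sB / (V/W)^2) V (S / (V/W)) (V/W)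
      (div_pos hsB (pow_pos hlam 2)) hV (div_pos hS hlam) hlam
    have e1 : (V/W)^2 * (sB / (V/W)^2) = sB := by field_simp
    have e2 : (V/W) * (S / (V/W)) = S := by field_simp
    have e3 : V / (V/W) = W := by field_simp
    rw [e1, e2, e3] at h1
    rw [e1, e2] at h2
    rw [h2, h1]
  have h111 : 0 < g 1 1 1 := hpos 1 1 1 one_pos one_pos one_pos
  refine ⟨Real.sqrt (g 1 1 1), Real.sqrt_pos.mpr h111, ?_⟩
  intro sB V S hsB hV hS
  have hSsq : (0:ℝ) < S ^ 2 := pow_pos hS 2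
  -- g sB 1 S = sB * g 1 1 S
  have ht := htime 1 1 S sB one_pos one_pos hS hsB
  rw [mul_one] at ht
  have h1 : g sB V S = sB * g 1 1 S := by
    rw [hindep sB V sB S hsB hV hsB hS, ht]
  -- S² * g 1 1 S = g 1 1 1
  have hm := hmoney 1 1 1 S one_pos one_pos one_pos hS
  rw [mul_one, mul_one] at hm
  have ht2 := htime 1 1 S (S^2) one_pos one_pos hS hSsq
  rw [mul_one] at ht2
  have h2 : g (S^2) 1 S = S^2 * g 1 1 S := by
    rw [hindep (S^2) 1 (S^2) S hSsq one_pos hSsq hS, ht2]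
  have h3 : S^2 * g 1 1 S = g 1 1 1 := by rw [← h2, hm]
  have hg11S : g 1 1 S = g 1 1 1 / S^2 := by
    field_simp [ne_of_gt hSsq] at h3 ⊢
    linarith [h3]
  rw [h1, hg11S, Real.sq_sqrt (le_of_lt h111)]
  ring
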